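/- Let 1 < q < p, s₁ ∈ (0,1], and β ∈ (0, 1/(p-1)). Then (q/p) · s₁/(β+1)^{q-1} ≤ ω_p(s₁)^{p-q} - G(β)/(p(β+1)^q) · ω_p(s₁)^p, with equality if and only if β = ω_p(s₁) - 1. -/

import Mathlib

open Real Set

/-- `w` plays the role of `ω_p(s₁)`. -/
theorem stmt6 (p q s₁ β w : ℝ) (hq : 1 < q) (hpq : q < p) (hs₁ : s₁ ∈ Ioc (0 : ℝ) 1)
    (hβ : β ∈ Ioo 0 (1 / (p - 1)))
    (hw : w ∈ Icc 1 (p / (p - 1))) (hws : -(p - 1) * w ^ p + p * w ^ (p - 1) = s₁) :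
    q / p * s₁ / (β + 1) ^ (q - 1)
      ≤ w ^ (p - q) - (q * (p - 1) * (β + 1) - p * (q - 1)) / (p * (β + 1) ^ q) * w ^ p ∧
    (q / p * s₁ / (β + 1) ^ (q - 1)
      = w ^ (p - q) - (q * (p - 1) * (β + 1) - p * (q - 1)) / (p * (β + 1) ^ q) * w ^ p
      ↔ β = w - 1) := by
  obtain ⟨hβ0, hβ1⟩ := hβ
  obtain ⟨hw1, hw2⟩ := hw
  have hp1 : 1 < p := hq.trans hpq
  have hp0 : 0 < p := by linarith
  have hw0 : 0 < w := by linarith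
  have hx0 : 0 < β + 1 := by linarith
  set u := (β + 1) / w with hu
  have hu0 : 0 < u := div_pos hx0 hw0
  have hxw : β + 1 = u * w := by rw [hu]; field_simp [hw0.ne']
  have hA0 : 0 < w ^ (p - q) := rpow_pos_of_pos hw0 _
  have hC0 : 0 < w ^ (q - 1) := rpow_pos_of_pos hw0 _
  have hV0 : 0 < u ^ (q - 1) := rpow_pos_of_pos hu0 _
  have hU0 : 0 < u ^ q := rpow_pos_of_pos hu0 _
  have hB : w ^ p = w ^ (p - q) * w ^ q := by
    rw [← rpow_add hw0]; ring_nf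
  have hC : w ^ (p - 1) = w ^ (p - q) * w ^ (q - 1) := by
    rw [← rpow_add hw0]; ring_nf
  have hCw : w ^ q = w ^ (q - 1) * w := by
    nth_rewrite 1 [show q = (q-1)+1 by ring]
    rw [rpow_add hw0, rpow_one]
  have hUu : u ^ q = u ^ (q - 1) * u := by
    nth_rewrite 1 [show q = (q-1)+1 by ring]
    rw [rpow_add hu0, rpow_one]
  have hX : (β + 1) ^ (q - 1) = u ^ (q - 1) * w ^ (q - 1) := by
    rw [hxw, mul_rpow hu0.le hw0.le]
  have hXq : (β + 1) ^ q = u ^ q * w ^ q := by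
    rw [hxw, mul_rpow hu0.le hw0.le]
  have key : w ^ (p - q) - (q * (p - 1) * (β + 1) - p * (q - 1)) / (p * (β + 1) ^ q) * w ^ p
      - q / p * s₁ / (β + 1) ^ (q - 1)
      = (w ^ (p - q) / u ^ q) * (u ^ q - q * u + (q - 1)) := by
    rw [← hws, hB, hC, hX, hXq, hCw, hUu, hxw]
    field_simp
    ring
  have hber : 1 + q * (u - 1) ≤ u ^ q := by
    have h := one_add_mul_self_le_rpow_one_add (by linarith : (-1:ℝ) ≤ u - 1) hq.le
    have h1 : 1 + (u - 1) = u := by ring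
    rwa [h1] at h
  constructor
  · have hpos : 0 ≤ (w ^ (p - q) / u ^ q) * (u ^ q - q * u + (q - 1)) :=
      mul_nonneg (by positivity) (by linarith)
    linarith [key, hpos]
  · constructor
    · intro heq
      have hz : (w ^ (p - q) / u ^ q) * (u ^ q - q * u + (q - 1)) = 0 := by
        linarith [key]
      have hz2 : u ^ q - q * u + (q - 1) = 0 := by
        rcases mul_eq_zero.mp hz with h | h
        · exact absurd h (by positivity)
        · exact h
      by_contra hne
      have hune : u ≠ 1 := by
        intro hu1
        apply hne
        have : β + 1 = w := by
          have := hxw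
          rw [hu1, one_mul] at this
          linarith
        linarith
      have hstrict := one_add_mul_self_lt_rpow_one_add
        (by linarith : (-1:ℝ) ≤ u - 1) (by intro h; exact hune (by linarith)) hq
      have h1 : 1 + (u - 1) = u := by ring
      rw [h1] at hstrict
      linarith
    · intro hbw
      have hu1 : u = 1 := by
        rw [hu, hbw]
        field_simp
        ring
      have hUq : u ^ q = 1 := by rw [hu1, one_rpow]
      have : (w ^ (p - q) / u ^ q) * (u ^ q - q * u + (q - 1)) = 0 := by
        rw [hUq, hu1]; ring
      linarith [key, this]
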